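/- Let α, β : ℝ → ℝ be C² with α > 0, solving β'' + 2(α'/α)β' = 0 and (1+2α⁻⁶)(α'/α)' + (1−4α⁻⁶)(α'/α)² − (β')² = 0, with α(0)=1, β(0)=0. Then β'(t) = β'(0) α(t)⁻² for all t, and the quantity e(t) = (1+2α(t)⁻⁶)(α'(t))² + (β'(0))² α(t)⁻² is constant in t. -/

import Mathlib

open Filter Topology
noncomputable section

/-- for the reduced swirling-flow system, β'(t) = β'(0)/α(t)² and the
energy e(t) = (1+2α⁻⁶)(α')² + β'(0)²α⁻² is conserved. -/
theorem stmt15 (α β : ℝ → ℝ)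
    (hα : ContDiff ℝ 2 α) (hβ : ContDiff ℝ 2 β)
    (hαpos : ∀ t : ℝ, 0 < α t)
    (hβeq : ∀ t : ℝ, deriv (deriv β) t + 2 * (deriv α t / α t) * deriv β t = 0)
    (hαeq : ∀ t : ℝ, (1 + 2 / α t ^ 6) * deriv (fun s => deriv α s / α s) t
      + (1 - 4 / α t ^ 6) * (deriv α t / α t) ^ 2 - (deriv β t) ^ 2 = 0)
    (hα0 : α 0 = 1) (hβ0 : β 0 = 0) :
    (∀ t : ℝ, deriv β t = deriv β 0 / α t ^ 2) ∧
    (∀ t : ℝ,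
      (1 + 2 / α t ^ 6) * (deriv α t) ^ 2 + (deriv β 0) ^ 2 / α t ^ 2
        = (1 + 2 / α 0 ^ 6) * (deriv α 0) ^ 2 + (deriv β 0) ^ 2 / α 0 ^ 2) := by
  have hαne : ∀ t, α t ≠ 0 := fun t => (hαpos t).ne'
  have h2 : (2 : WithTop ℕ∞) = 1 + 1 := by norm_num
  obtain ⟨hαd, -, hα'c⟩ := contDiff_succ_iff_deriv.mp (h2 ▸ hα)
  obtain ⟨hβd, -, hβ'c⟩ := contDiff_succ_iff_deriv.mp (h2 ▸ hβ)
  have hα'd : Differentiable ℝ (deriv α) := hα'c.differentiable one_ne_zero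
  have hβ'd : Differentiable ℝ (deriv β) := hβ'c.differentiable one_ne_zero
  -- Step 1: β' α² is constant
  have hf : ∀ t, deriv β t * α t ^ 2 = deriv β 0 := by
    have hd : Differentiable ℝ (fun t => deriv β t * α t ^ 2) :=
      hβ'd.mul ((hαd.pow 2))
    have hderiv : ∀ t, deriv (fun t => deriv β t * α t ^ 2) t = 0 := by
      intro t
      have h1 : HasDerivAt (deriv β) (deriv (deriv β) t) t := (hβ'd t).hasDerivAt
      have h2 : HasDerivAt (fun s => α s ^ 2) (2 * α t ^ 1 * deriv α t) t := by
        simpa using ((hαd t).hasDerivAt.fun_pow 2)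
      have h3 := (h1.fun_mul h2)
      rw [h3.deriv]
      have hb := hβeq t
      have : deriv (deriv β) t = -(2 * (deriv α t / α t) * deriv β t) := by linarith
      rw [this]
      field_simp [hαne t]
      ring
    have := is_const_of_deriv_eq_zero hd hderiv
    intro t
    have := this t 0
    simpa [hα0] using this
  have hβ' : ∀ t, deriv β t = deriv β 0 / α t ^ 2 := by
    intro t
    rw [eq_div_iff (pow_ne_zero 2 (hαne t))]
    exact hf t
  refine ⟨hβ', ?_⟩
  -- Step 2: energy is constant
  set c := deriv β 0 with hc
  have hE : Differentiable ℝ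
      (fun t => (1 + 2 / α t ^ 6) * (deriv α t) ^ 2 + c ^ 2 / α t ^ 2) := by
    refine Differentiable.add ?_ ?_
    · exact (differentiable_const _ |>.add
        ((differentiable_const _).div (hαd.pow 6) (fun t => pow_ne_zero _ (hαne t)))).mul
        (hα'd.pow 2)
    · exact (differentiable_const _).div (hαd.pow 2) (fun t => pow_ne_zero _ (hαne t))
  have hderiv : ∀ t, deriv
      (fun t => (1 + 2 / α t ^ 6) * (deriv α t) ^ 2 + c ^ 2 / α t ^ 2) t = 0 := by
    intro t
    have hA : HasDerivAt α (deriv α t) t := (hαd t).hasDerivAt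
    have hA' : HasDerivAt (deriv α) (deriv (deriv α) t) t := (hα'd t).hasDerivAt
    -- derivative of α'/α
    have hq : HasDerivAt (fun s => deriv α s / α s)
        ((deriv (deriv α) t * α t - deriv α t * deriv α t) / α t ^ 2) t :=
      hA'.div hA (hαne t)
    have hqeq : deriv (fun s => deriv α s / α s) t
        = (deriv (deriv α) t * α t - deriv α t * deriv α t) / α t ^ 2 := hq.deriv
    -- pieces of the energy
    have h6 : HasDerivAt (fun s => α s ^ 6) (6 * α t ^ 5 * deriv α t) t := by
      simpa using hA.fun_pow 6
    have hg1 : HasDerivAt (fun s => 1 + 2 / α s ^ 6)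
        ((0 * α t ^ 6 - 2 * (6 * α t ^ 5 * deriv α t)) / (α t ^ 6) ^ 2) t := by
      simpa using (hasDerivAt_const t (1:ℝ)).fun_add
        (((hasDerivAt_const t (2:ℝ)).fun_div h6 (pow_ne_zero _ (hαne t))))
    have hg2 : HasDerivAt (fun s => (deriv α s) ^ 2)
        (2 * deriv α t ^ 1 * deriv (deriv α) t) t := by
      simpa using hA'.fun_pow 2
    have h2pow : HasDerivAt (fun s => α s ^ 2) (2 * α t ^ 1 * deriv α t) t := by
      simpa using hA.fun_pow 2
    have hg3 : HasDerivAt (fun s => c ^ 2 / α s ^ 2)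
        ((0 * α t ^ 2 - c ^ 2 * (2 * α t ^ 1 * deriv α t)) / (α t ^ 2) ^ 2) t :=
      (hasDerivAt_const t (c^2)).div h2pow (pow_ne_zero _ (hαne t))
    have hE' := (hg1.fun_mul hg2).fun_add hg3
    rw [hE'.deriv]
    -- use the ODE and step 1
    have he := hαeq t
    rw [hqeq, hβ' t] at he
    have hAne := hαne t
    field_simp at he ⊢
    linear_combination (2 * deriv α t) * he
  have hconst := is_const_of_deriv_eq_zero hE hderiv
  intro t
  exact hconst t 0
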